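/- arXiv:2503.24054 — 7 statements merged into one kernel-verified Lean document; each statement's English description precedes it below -/
import Mathlib

section
/- Let R be a commutative ring, let u, v : ℕ × ℕ → R, let (a_n)_{n≥0} be a sequence in R, and let (a_n^k) be the associated Euler–Seidel matrix with coefficients. Then for all integers n ≥ 0 and k ≥ 0, a_n^k = Σ_{ℓ=0}^{k} C_n(k,ℓ) · a_{n+ℓ}^0, where C_n(k,ℓ) = Σ_{A ⊆ {1,…,k}, |A| = k−ℓ} ( ∏_{i=0}^{k−ℓ−1} u(n+k−h_i−i, h_i) ) · ( ∏_{j=0}^{ℓ−1} v(n+j, m_j) ), with h_0 > h_1 > ⋯ > h_{k−ℓ−1} the decreasing enumeration of A and m_0 > m_1 > ⋯ > m_{ℓ−1} the decreasing enumeration of {1,…,k} ∖ A. -/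
open Finset

/-- Decreasing enumeration of a finite set of naturals, as a list accessed by `getD`. -/
def descEnum (A : Finset ℕ) (i : ℕ) : ℕ := (A.sort (· ≤ ·)).reverse.getD i 0

/-- The coefficient `C_n(k,ℓ)` of Theorem 2.1: sum over subsets `A ⊆ {1,…,k}` with
`|A| = k − ℓ` of the product of the `u`-weights along the decreasing enumeration of `A`
and the `v`-weights along the decreasing enumeration of `{1,…,k} \ A`. -/
def eulerSeidelCoeff {R : Type*} [CommRing R] (u v : ℕ → ℕ → R) (n k ℓ : ℕ) : R :=
  ∑ A ∈ (Finset.Icc 1 k).powersetCard (k - ℓ),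
    (∏ i ∈ Finset.range (k - ℓ), u (n + k - descEnum A i - i) (descEnum A i)) *
    (∏ j ∈ Finset.range ℓ, v (n + j) (descEnum ((Finset.Icc 1 k) \ A) j))

lemma sort_insert_max {A : Finset ℕ} {m : ℕ} (h : ∀ x ∈ A, x < m) :
    (insert m A).sort (· ≤ ·) = A.sort (· ≤ ·) ++ [m] := by
  have hm : m ∉ A := fun hx => lt_irrefl m (h m hx)
  have hperm : List.Perm ((insert m A).sort (· ≤ ·)) (A.sort (· ≤ ·) ++ [m]) := by
    rw [← Multiset.coe_eq_coe]
    simp only [Finset.sort_eq, ← Multiset.coe_add]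
    rw [Finset.insert_val, Multiset.ndinsert_of_notMem (by simpa using hm)]
    rw [add_comm]
    simp
  have hsorted : List.Pairwise (· ≤ ·) (A.sort (· ≤ ·) ++ [m]) := by
    rw [List.pairwise_append]
    refine ⟨Finset.pairwise_sort _ _, by simp, ?_⟩
    intro x hx y hy
    simp at hy; subst hy
    exact (h x (by simpa using hx)).le
  exact List.Perm.eq_of_pairwise' (Finset.pairwise_sort _ _) hsorted hperm

lemma descEnum_insert_zero {A : Finset ℕ} {m : ℕ} (h : ∀ x ∈ A, x < m) :
    descEnum (insert m A) 0 = m := by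
  simp [descEnum, sort_insert_max h]

lemma descEnum_insert_succ {A : Finset ℕ} {m : ℕ} (h : ∀ x ∈ A, x < m) (i : ℕ) :
    descEnum (insert m A) (i + 1) = descEnum A i := by
  simp [descEnum, sort_insert_max h]

lemma descEnum_le {A : Finset ℕ} {k : ℕ} (h : A ⊆ Finset.Icc 1 k) (i : ℕ) :
    descEnum A i ≤ k := by
  unfold descEnum
  rcases lt_or_ge i (A.sort (· ≤ ·)).reverse.length with hi | hi
  · rw [List.getD_eq_getElem?_getD, List.getElem?_eq_getElem hi]
    have := List.getElem_mem hi
    rw [List.mem_reverse, Finset.mem_sort] at this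
    exact (Finset.mem_Icc.1 (h this)).2
  · rw [List.getD_eq_getElem?_getD, List.getElem?_eq_none hi]
    simp

lemma sdiff_insert_eq {k : ℕ} {B : Finset ℕ} (hB : B ⊆ Finset.Icc 1 k) :
    Finset.Icc 1 (k+1) \ insert (k+1) B = Finset.Icc 1 k \ B := by
  ext x
  by_cases hx : x ∈ B
  · have := (Finset.mem_Icc.1 (hB hx)).2
    simp [Finset.mem_sdiff, hx]
  · simp [Finset.mem_sdiff, hx, Finset.mem_Icc, Finset.mem_insert]
    omega

lemma sdiff_eq_insert {k : ℕ} {A : Finset ℕ} (hA : A ⊆ Finset.Icc 1 k) :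
    Finset.Icc 1 (k+1) \ A = insert (k+1) (Finset.Icc 1 k \ A) := by
  ext x
  by_cases hx : x ∈ A
  · have := (Finset.mem_Icc.1 (hA hx)).2
    simp [Finset.mem_sdiff, hx, Finset.mem_Icc, Finset.mem_insert]
    omega
  · simp [Finset.mem_sdiff, hx, Finset.mem_Icc, Finset.mem_insert]
    omega

lemma sdiff_lt_succ {k : ℕ} (A : Finset ℕ) :
    ∀ x ∈ Finset.Icc 1 k \ A, x < k + 1 := by
  intro x hx
  have := (Finset.mem_Icc.1 (Finset.mem_sdiff.1 hx).1).2
  omega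

lemma v_term {R : Type*} [CommRing R] (u v : ℕ → ℕ → R) (n k m t : ℕ)
    {A : Finset ℕ} (hA : A ⊆ Finset.Icc 1 k) :
    (∏ i ∈ Finset.range t, u (n + (k+1) - descEnum A i - i) (descEnum A i)) *
    (∏ j ∈ Finset.range (m+1), v (n + j) (descEnum ((Finset.Icc 1 (k+1)) \ A) j)) =
    v n (k+1) * ((∏ i ∈ Finset.range t, u (n + 1 + k - descEnum A i - i) (descEnum A i)) *
    (∏ j ∈ Finset.range m, v (n + 1 + j) (descEnum ((Finset.Icc 1 k) \ A) j))) := by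
  have hu : (∏ i ∈ Finset.range t, u (n + (k+1) - descEnum A i - i) (descEnum A i)) =
      ∏ i ∈ Finset.range t, u (n + 1 + k - descEnum A i - i) (descEnum A i) := by
    refine Finset.prod_congr rfl fun i _ => ?_
    rw [show n + (k+1) = n + 1 + k from by omega]
  rw [hu, sdiff_eq_insert hA, Finset.prod_range_succ']
  rw [descEnum_insert_zero (sdiff_lt_succ A)]
  have hv : ∀ j ∈ Finset.range m,
      v (n + (j+1)) (descEnum (insert (k+1) (Finset.Icc 1 k \ A)) (j+1)) =
      v (n + 1 + j) (descEnum ((Finset.Icc 1 k) \ A) j) := by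
    intro j _
    rw [descEnum_insert_succ (sdiff_lt_succ A), show n + (j+1) = n + 1 + j from by omega]
  rw [Finset.prod_congr rfl hv, add_zero]
  ring

lemma u_term {R : Type*} [CommRing R] (u v : ℕ → ℕ → R) (n k ℓ s : ℕ)
    {B : Finset ℕ} (hB : B ⊆ Finset.Icc 1 k) :
    (∏ i ∈ Finset.range (s+1),
      u (n + (k+1) - descEnum (insert (k+1) B) i - i) (descEnum (insert (k+1) B) i)) *
    (∏ j ∈ Finset.range ℓ, v (n + j) (descEnum ((Finset.Icc 1 (k+1)) \ insert (k+1) B) j)) =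
    u n (k+1) * ((∏ i ∈ Finset.range s, u (n + k - descEnum B i - i) (descEnum B i)) *
    (∏ j ∈ Finset.range ℓ, v (n + j) (descEnum ((Finset.Icc 1 k) \ B) j))) := by
  have hBlt : ∀ x ∈ B, x < k + 1 := fun x hx => by
    have := (Finset.mem_Icc.1 (hB hx)).2; omega
  rw [Finset.prod_range_succ', descEnum_insert_zero hBlt]
  have h0 : n + (k+1) - (k+1) - 0 = n := by omega
  rw [h0]
  have hu : ∀ i ∈ Finset.range s,
      u (n + (k+1) - descEnum (insert (k+1) B) (i+1) - (i+1))
        (descEnum (insert (k+1) B) (i+1)) =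
      u (n + k - descEnum B i - i) (descEnum B i) := by
    intro i _
    rw [descEnum_insert_succ hBlt]
    have := descEnum_le hB i
    rw [show n + (k+1) - descEnum B i - (i+1) = n + k - descEnum B i - i from by omega]
  rw [Finset.prod_congr rfl hu, sdiff_insert_eq hB]
  ring

lemma coeff_succ {R : Type*} [CommRing R] (u v : ℕ → ℕ → R) (n k ℓ : ℕ) (hℓ : ℓ ≤ k + 1) :
    eulerSeidelCoeff u v n (k+1) ℓ =
      (if ℓ ≤ k then u n (k+1) * eulerSeidelCoeff u v n k ℓ else 0) +
      (if 1 ≤ ℓ then v n (k+1) * eulerSeidelCoeff u v (n+1) k (ℓ-1) else 0) := by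
  have hicc : Finset.Icc 1 (k+1) = insert (k+1) (Finset.Icc 1 k) := by
    ext x; simp [Finset.mem_Icc, Finset.mem_insert]; omega
  have hnotmem : (k+1) ∉ Finset.Icc 1 k := by simp
  by_cases hcase : ℓ ≤ k
  · have hsub : k + 1 - ℓ = (k - ℓ) + 1 := by omega
    have hdisj : Disjoint ((Finset.Icc 1 k).powersetCard (k - ℓ + 1))
        (((Finset.Icc 1 k).powersetCard (k - ℓ)).image (insert (k+1))) := by
      rw [Finset.disjoint_left]
      intro A hA hA'
      rw [Finset.mem_powersetCard] at hA
      obtain ⟨B, _, rfl⟩ := Finset.mem_image.1 hA'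
      exact hnotmem (hA.1 (Finset.mem_insert_self _ _))
    have hinj : ∀ B ∈ (Finset.Icc 1 k).powersetCard (k - ℓ),
        ∀ B' ∈ (Finset.Icc 1 k).powersetCard (k - ℓ),
        insert (k+1) B = insert (k+1) B' → B = B' := by
      intro B hB B' hB' hBB
      have h1 : (k+1) ∉ B := fun h => hnotmem ((Finset.mem_powersetCard.1 hB).1 h)
      have h2 : (k+1) ∉ B' := fun h => hnotmem ((Finset.mem_powersetCard.1 hB').1 h)
      rw [← Finset.erase_insert h1, ← Finset.erase_insert h2, hBB]
    have hImage : (∑ B ∈ (Finset.Icc 1 k).powersetCard (k - ℓ),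
        (∏ i ∈ Finset.range (k - ℓ + 1),
          u (n + (k+1) - descEnum (insert (k+1) B) i - i) (descEnum (insert (k+1) B) i)) *
        (∏ j ∈ Finset.range ℓ,
          v (n + j) (descEnum ((Finset.Icc 1 (k+1)) \ insert (k+1) B) j))) =
        u n (k+1) * eulerSeidelCoeff u v n k ℓ := by
      rw [eulerSeidelCoeff, Finset.mul_sum]
      exact Finset.sum_congr rfl fun B hB =>
        u_term u v n k ℓ (k - ℓ) (Finset.mem_powersetCard.1 hB).1
    have hFirst : (∑ A ∈ (Finset.Icc 1 k).powersetCard (k - ℓ + 1),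
        (∏ i ∈ Finset.range (k - ℓ + 1), u (n + (k+1) - descEnum A i - i) (descEnum A i)) *
        (∏ j ∈ Finset.range ℓ, v (n + j) (descEnum ((Finset.Icc 1 (k+1)) \ A) j))) =
        if 1 ≤ ℓ then v n (k+1) * eulerSeidelCoeff u v (n+1) k (ℓ-1) else 0 := by
      by_cases h1 : 1 ≤ ℓ
      · obtain ⟨m, rfl⟩ : ∃ m, ℓ = m + 1 := ⟨ℓ - 1, by omega⟩
        rw [if_pos h1, Nat.add_sub_cancel, show k - (m+1) + 1 = k - m from by omega,
          eulerSeidelCoeff, Finset.mul_sum]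
        exact Finset.sum_congr rfl fun A hA =>
          v_term u v n k m (k - m) (Finset.mem_powersetCard.1 hA).1
      · have h0 : ℓ = 0 := by omega
        subst h0
        rw [if_neg h1]
        have hempty : (Finset.Icc 1 k).powersetCard (k - 0 + 1) = ∅ := by
          rw [Finset.powersetCard_eq_empty, Nat.card_Icc]
          omega
        rw [hempty, Finset.sum_empty]
    rw [eulerSeidelCoeff, hsub,
      show (Finset.Icc 1 (k+1)).powersetCard (k - ℓ + 1)
        = (insert (k+1) (Finset.Icc 1 k)).powersetCard (k - ℓ + 1) from by rw [← hicc],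
      Finset.powersetCard_succ_insert hnotmem, Finset.sum_union hdisj,
      Finset.sum_image hinj, hImage, hFirst, if_pos hcase]
    exact add_comm _ _
  · have hlk : ℓ = k + 1 := by omega
    subst hlk
    rw [if_neg hcase, if_pos (by omega), zero_add]
    have hsub : k + 1 - (k + 1) = 0 := by omega
    have hsub2 : k + 1 - 1 = k := by omega
    rw [eulerSeidelCoeff, hsub, hsub2, eulerSeidelCoeff]
    have hsub3 : k - k = 0 := by omega
    rw [hsub3]
    simp only [Finset.powersetCard_zero, Finset.sum_singleton, Finset.prod_range_zero,
      one_mul, Finset.sdiff_empty]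
    have hlt : ∀ x ∈ Finset.Icc 1 k, x < k + 1 := fun x hx => by
      have := (Finset.mem_Icc.1 hx).2; omega
    rw [hicc, Finset.prod_range_succ', descEnum_insert_zero hlt, add_zero]
    have hv : ∀ j ∈ Finset.range k,
        v (n + (j+1)) (descEnum (insert (k+1) (Finset.Icc 1 k)) (j+1)) =
        v (n + 1 + j) (descEnum (Finset.Icc 1 k) j) := by
      intro j _
      rw [descEnum_insert_succ hlt, show n + (j+1) = n + 1 + j from by omega]
    rw [Finset.prod_congr rfl hv]
    ring

/-- Theorem 2.1: every entry of the Euler–Seidel matrix with coefficients is the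
corresponding combination of the entries of the initial sequence. -/
theorem eulerSeidel_entry_eq_sum_initial {R : Type*} [CommRing R]
    (u v : ℕ → ℕ → R) (a₀ : ℕ → R) (a : ℕ → ℕ → R)
    (h0 : ∀ n, a n 0 = a₀ n)
    (hrec : ∀ n k, a n (k + 1) = u n (k + 1) * a n k + v n (k + 1) * a (n + 1) k) :
    ∀ n k, a n k = ∑ ℓ ∈ Finset.range (k + 1), eulerSeidelCoeff u v n k ℓ * a (n + ℓ) 0 := by
  intro n k
  induction k generalizing n with
  | zero => simp [eulerSeidelCoeff]
  | succ k ih =>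
    rw [hrec n k, ih n, ih (n+1)]
    have key : ∀ ℓ ∈ Finset.range (k+2),
        eulerSeidelCoeff u v n (k+1) ℓ * a (n+ℓ) 0 =
        (if ℓ ≤ k then u n (k+1) * eulerSeidelCoeff u v n k ℓ else 0) * a (n+ℓ) 0 +
        (if 1 ≤ ℓ then v n (k+1) * eulerSeidelCoeff u v (n+1) k (ℓ-1) else 0) * a (n+ℓ) 0 := by
      intro ℓ hℓ
      rw [coeff_succ u v n k ℓ (by have := Finset.mem_range.1 hℓ; omega)]
      ring
    rw [show k + 1 + 1 = k + 2 from rfl, Finset.sum_congr rfl key, Finset.sum_add_distrib]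
    congr 1
    · symm
      rw [Finset.sum_range_succ
        (fun ℓ => (if ℓ ≤ k then u n (k+1) * eulerSeidelCoeff u v n k ℓ else 0) * a (n+ℓ) 0)
        (k+1), if_neg (show ¬ (k+1 ≤ k) by omega), zero_mul, add_zero, Finset.mul_sum]
      refine Finset.sum_congr rfl fun ℓ hℓ => ?_
      rw [if_pos (show ℓ ≤ k by have := Finset.mem_range.1 hℓ; omega)]
      ring
    · symm
      rw [Finset.sum_range_succ'
        (fun ℓ => (if 1 ≤ ℓ then v n (k+1) * eulerSeidelCoeff u v (n+1) k (ℓ-1) else 0) * a (n+ℓ) 0)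
        (k+1), if_neg (show ¬ (1 ≤ 0) by omega), zero_mul, add_zero, Finset.mul_sum]
      refine Finset.sum_congr rfl fun ℓ _ => ?_
      rw [if_pos (by omega), Nat.add_sub_cancel, show n + (ℓ+1) = n + 1 + ℓ from by omega]
      ring
end

section
/- Let R be a nontrivial commutative ring and let u, v : ℕ × ℕ → R. There exists a unique family of coefficients r : ℕ × ℕ → R with r(k,ℓ) = 0 for ℓ > k such that, for every initial sequence (a_n)_{n≥0} in R, the final sequence (a_0^k)_{k≥0} of the Euler–Seidel matrix with coefficients M(u,v,a) satisfies a_0^k = Σ_{ℓ=0}^{k} r(k,ℓ) · a_ℓ^0 for all k ≥ 0; namely, r(k,ℓ) = C_0(k,ℓ) for 0 ≤ ℓ ≤ k. -/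
open Finset

/-- `r` is a lower-triangular family of coefficients expressing, for every Euler–Seidel
matrix with coefficients `u`, `v`, the final sequence in terms of the initial one. -/
def IsFinalCoeff {R : Type*} [CommRing R] (u v : ℕ → ℕ → R) (r : ℕ → ℕ → R) : Prop :=
  (∀ k ℓ, k < ℓ → r k ℓ = 0) ∧
    ∀ a : ℕ → ℕ → R,
      (∀ n k, a n (k + 1) = u n (k + 1) * a n k + v n (k + 1) * a (n + 1) k) →
      ∀ k, a 0 k = ∑ ℓ ∈ Finset.range (k + 1), r k ℓ * a ℓ 0

section Aux

lemma sort_max_append {A : Finset ℕ} {M : ℕ} (hM : M ∈ A) (h : ∀ x ∈ A, x ≤ M) :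
    A.sort (· ≤ ·) = (A.erase M).sort (· ≤ ·) ++ [M] := by
  refine (fun hp h1 h2 => List.Perm.eq_of_pairwise' (r := (· ≤ ·)) h1 h2 hp) ?_ ?_ ?_
  · rw [← Multiset.coe_eq_coe, ← Multiset.coe_add, Multiset.coe_singleton, Finset.sort_eq,
      Finset.sort_eq, add_comm, Multiset.singleton_add, Finset.erase_val,
      Multiset.cons_erase hM]
  · exact Finset.pairwise_sort _ _
  · rw [List.pairwise_append]
    refine ⟨Finset.pairwise_sort _ _, List.pairwise_singleton _ _, ?_⟩
    intro x hx y hy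
    rw [List.mem_singleton] at hy
    subst hy
    exact h x (Finset.mem_of_mem_erase (Finset.mem_sort _ |>.1 hx))

lemma descEnum_mem' {A : Finset ℕ} {i : ℕ} (hi : i < A.card) : descEnum A i ∈ A := by
  have hlen : (A.sort (· ≤ ·)).reverse.length = A.card := by
    rw [List.length_reverse, Finset.length_sort]
  rw [descEnum, List.getD_eq_getElem _ _ (by omega)]
  have h2 : (A.sort (· ≤ ·)).reverse[i]'(by omega) ∈ (A.sort (· ≤ ·)).reverse :=
    List.getElem_mem _
  rw [List.mem_reverse, Finset.mem_sort] at h2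
  exact h2

lemma descEnum_zero_max' {A : Finset ℕ} {M : ℕ} (hM : M ∈ A) (h : ∀ x ∈ A, x ≤ M) :
    descEnum A 0 = M := by
  rw [descEnum, sort_max_append hM h, List.reverse_append]
  rfl

lemma descEnum_succ_max' {A : Finset ℕ} {M : ℕ} (hM : M ∈ A) (h : ∀ x ∈ A, x ≤ M) (i : ℕ) :
    descEnum A (i + 1) = descEnum (A.erase M) i := by
  rw [descEnum, descEnum, sort_max_append hM h, List.reverse_append]
  rfl

variable {R : Type*} [CommRing R]

/-- The canonical coefficients, defined by the natural recursion. -/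
def D (u v : ℕ → ℕ → R) : ℕ → ℕ → ℕ → R
  | _, 0, ℓ => if ℓ = 0 then 1 else 0
  | n, (k+1), ℓ => u n (k+1) * D u v n k ℓ +
      v n (k+1) * (match ℓ with | 0 => 0 | (m+1) => D u v (n+1) k m)

lemma D_eq_zero (u v : ℕ → ℕ → R) : ∀ k n ℓ, k < ℓ → D u v n k ℓ = 0 := by
  intro k
  induction k with
  | zero => intro n ℓ h; simp [D]; omega
  | succ k ih =>
    intro n ℓ h
    match ℓ, h with
    | (m+1), h =>
      simp only [D, ih n (m+1) (by omega), ih (n+1) m (by omega), mul_zero, add_zero]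

lemma D_expand (u v : ℕ → ℕ → R) (a : ℕ → ℕ → R)
    (ha : ∀ n k, a n (k + 1) = u n (k + 1) * a n k + v n (k + 1) * a (n + 1) k) :
    ∀ k n, a n k = ∑ ℓ ∈ Finset.range (k + 1), D u v n k ℓ * a (n + ℓ) 0 := by
  intro k
  induction k with
  | zero => intro n; simp [D]
  | succ k ih =>
    intro n
    rw [ha n k, ih n, ih (n+1)]
    have h1 : ∀ ℓ ∈ Finset.range (k+2), D u v n (k+1) ℓ * a (n + ℓ) 0 =
        u n (k+1) * (D u v n k ℓ * a (n + ℓ) 0) +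
        v n (k+1) * ((match ℓ with | 0 => 0 | (m+1) => D u v (n+1) k m) * a (n + ℓ) 0) := by
      intro ℓ _; simp only [D]; ring
    rw [Finset.sum_congr rfl h1, Finset.sum_add_distrib, ← Finset.mul_sum, ← Finset.mul_sum]
    congr 1
    · congr 1
      conv_rhs => rw [Finset.sum_range_succ]
      rw [D_eq_zero u v k n (k+1) (by omega), zero_mul, add_zero]
    · congr 1
      conv_rhs => rw [Finset.sum_range_succ']
      simp only [zero_mul, add_zero]
      apply Finset.sum_congr rfl
      intro m _
      have : n + (m + 1) = n + 1 + m := by omega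
      rw [this]

lemma partA (u v : ℕ → ℕ → R) (n k ℓ : ℕ) (hℓ : ℓ ≤ k) :
    ∑ A ∈ (((Finset.Icc 1 (k+1)).powersetCard (k + 1 - ℓ)).filter (fun A => k + 1 ∈ A)),
      (∏ i ∈ Finset.range (k + 1 - ℓ), u (n + (k+1) - descEnum A i - i) (descEnum A i)) *
      (∏ j ∈ Finset.range ℓ, v (n + j) (descEnum ((Finset.Icc 1 (k+1)) \ A) j))
    = u n (k+1) * eulerSeidelCoeff u v n k ℓ := by
  rw [eulerSeidelCoeff, Finset.mul_sum]
  apply Finset.sum_nbij' (fun A => A.erase (k+1)) (fun B => insert (k+1) B)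
  · intro A hA
    rw [Finset.mem_filter, Finset.mem_powersetCard] at hA
    obtain ⟨⟨hsub, hcard⟩, hmem⟩ := hA
    rw [Finset.mem_powersetCard]
    constructor
    · intro x hx
      rw [Finset.mem_erase] at hx
      have := Finset.mem_Icc.1 (hsub hx.2)
      rw [Finset.mem_Icc]
      omega
    · rw [Finset.card_erase_of_mem hmem, hcard]; omega
  · intro B hB
    rw [Finset.mem_powersetCard] at hB
    obtain ⟨hsub, hcard⟩ := hB
    have hnm : k + 1 ∉ B := fun hc => by have := Finset.mem_Icc.1 (hsub hc); omega
    rw [Finset.mem_filter, Finset.mem_powersetCard]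
    refine ⟨⟨?_, ?_⟩, Finset.mem_insert_self _ _⟩
    · intro x hx
      rw [Finset.mem_insert] at hx
      rw [Finset.mem_Icc]
      rcases hx with rfl | hx
      · omega
      · have := Finset.mem_Icc.1 (hsub hx); omega
    · rw [Finset.card_insert_of_notMem hnm, hcard]; omega
  · intro A hA
    rw [Finset.mem_filter] at hA
    exact Finset.insert_erase hA.2
  · intro B hB
    rw [Finset.mem_powersetCard] at hB
    have hnm : k + 1 ∉ B := fun hc => by have := Finset.mem_Icc.1 (hB.1 hc); omega
    exact Finset.erase_insert hnm
  · intro A hA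
    rw [Finset.mem_filter, Finset.mem_powersetCard] at hA
    obtain ⟨⟨hsub, hcard⟩, hmem⟩ := hA
    have hmax : ∀ x ∈ A, x ≤ k + 1 := fun x hx => (Finset.mem_Icc.1 (hsub hx)).2
    have h0 : descEnum A 0 = k + 1 := descEnum_zero_max' hmem hmax
    have hcard' : (A.erase (k+1)).card = k - ℓ := by
      rw [Finset.card_erase_of_mem hmem, hcard]; omega
    have hrange : k + 1 - ℓ = (k - ℓ) + 1 := by omega
    rw [hrange, Finset.prod_range_succ']
    have hterm0 : u (n + (k+1) - descEnum A 0 - 0) (descEnum A 0) = u n (k+1) := by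
      rw [h0]; congr 1; omega
    have hprod : ∏ i ∈ Finset.range (k - ℓ),
        u (n + (k+1) - descEnum A (i+1) - (i+1)) (descEnum A (i+1)) =
        ∏ i ∈ Finset.range (k - ℓ),
        u (n + k - descEnum (A.erase (k+1)) i - i) (descEnum (A.erase (k+1)) i) := by
      apply Finset.prod_congr rfl
      intro i hi
      have hm : descEnum (A.erase (k+1)) i ∈ A.erase (k+1) :=
        descEnum_mem' (by rw [hcard']; exact Finset.mem_range.1 hi)
      have hk : descEnum (A.erase (k+1)) i ≤ k := by
        rw [Finset.mem_erase] at hm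
        have := Finset.mem_Icc.1 (hsub hm.2)
        omega
      rw [descEnum_succ_max' hmem hmax i]
      congr 1
      omega
    have hsdiff : Finset.Icc 1 (k+1) \ A = Finset.Icc 1 k \ A.erase (k+1) := by
      ext x
      simp only [Finset.mem_sdiff, Finset.mem_Icc, Finset.mem_erase]
      constructor
      · rintro ⟨⟨h1, h2⟩, h3⟩
        have hne : x ≠ k + 1 := fun e => h3 (e ▸ hmem)
        exact ⟨⟨h1, by omega⟩, fun hc => h3 hc.2⟩
      · rintro ⟨⟨h1, h2⟩, h3⟩
        exact ⟨⟨h1, by omega⟩, fun hx => h3 ⟨by omega, hx⟩⟩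
    rw [hterm0, hprod, hsdiff]
    ring

lemma partA' (u v : ℕ → ℕ → R) (n k : ℕ) :
    ∑ A ∈ (((Finset.Icc 1 (k+1)).powersetCard (k + 1 - (k+1))).filter (fun A => k + 1 ∈ A)),
      (∏ i ∈ Finset.range (k + 1 - (k+1)), u (n + (k+1) - descEnum A i - i) (descEnum A i)) *
      (∏ j ∈ Finset.range (k+1), v (n + j) (descEnum ((Finset.Icc 1 (k+1)) \ A) j))
    = 0 := by
  convert Finset.sum_empty
  rw [Finset.eq_empty_iff_forall_notMem]
  intro A hA
  rw [Finset.mem_filter, Finset.mem_powersetCard] at hA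
  obtain ⟨⟨_, hcard⟩, hmem⟩ := hA
  have : A = ∅ := Finset.card_eq_zero.1 (by rw [hcard]; omega)
  subst this
  exact Finset.notMem_empty _ hmem

lemma partB0 (u v : ℕ → ℕ → R) (n k : ℕ) :
    ∑ A ∈ (((Finset.Icc 1 (k+1)).powersetCard (k + 1 - 0)).filter (fun A => ¬ k + 1 ∈ A)),
      (∏ i ∈ Finset.range (k + 1 - 0), u (n + (k+1) - descEnum A i - i) (descEnum A i)) *
      (∏ j ∈ Finset.range 0, v (n + j) (descEnum ((Finset.Icc 1 (k+1)) \ A) j))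
    = 0 := by
  convert Finset.sum_empty
  rw [Finset.eq_empty_iff_forall_notMem]
  intro A hA
  rw [Finset.mem_filter, Finset.mem_powersetCard] at hA
  obtain ⟨⟨hsub, hcard⟩, hnm⟩ := hA
  have hsub' : A ⊆ Finset.Icc 1 k := by
    intro x hx
    have h1 := Finset.mem_Icc.1 (hsub hx)
    have h2 : x ≠ k + 1 := fun e => hnm (e ▸ hx)
    rw [Finset.mem_Icc]
    omega
  have := Finset.card_le_card hsub'
  rw [hcard, Nat.card_Icc] at this
  omega

lemma partB (u v : ℕ → ℕ → R) (n k m : ℕ) (hm : m ≤ k) :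
    ∑ A ∈ (((Finset.Icc 1 (k+1)).powersetCard (k + 1 - (m+1))).filter (fun A => ¬ k + 1 ∈ A)),
      (∏ i ∈ Finset.range (k + 1 - (m+1)), u (n + (k+1) - descEnum A i - i) (descEnum A i)) *
      (∏ j ∈ Finset.range (m+1), v (n + j) (descEnum ((Finset.Icc 1 (k+1)) \ A) j))
    = v n (k+1) * eulerSeidelCoeff u v (n+1) k m := by
  have hset : ((Finset.Icc 1 (k+1)).powersetCard (k + 1 - (m+1))).filter (fun A => ¬ k + 1 ∈ A)
      = (Finset.Icc 1 k).powersetCard (k - m) := by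
    ext A
    rw [Finset.mem_filter, Finset.mem_powersetCard, Finset.mem_powersetCard]
    constructor
    · rintro ⟨⟨hsub, hcard⟩, hnm⟩
      refine ⟨fun x hx => ?_, by omega⟩
      have h1 := Finset.mem_Icc.1 (hsub hx)
      have h2 : x ≠ k + 1 := fun e => hnm (e ▸ hx)
      rw [Finset.mem_Icc]; omega
    · rintro ⟨hsub, hcard⟩
      have hnm : k + 1 ∉ A := fun hc => by have := Finset.mem_Icc.1 (hsub hc); omega
      refine ⟨⟨fun x hx => ?_, by omega⟩, hnm⟩
      have := Finset.mem_Icc.1 (hsub hx)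
      rw [Finset.mem_Icc]; omega
  rw [hset, eulerSeidelCoeff, Finset.mul_sum]
  apply Finset.sum_congr rfl
  intro A hA
  rw [Finset.mem_powersetCard] at hA
  obtain ⟨hsub, hcard⟩ := hA
  have hnm : k + 1 ∉ A := fun hc => by have := Finset.mem_Icc.1 (hsub hc); omega
  have hrange : k + 1 - (m+1) = k - m := by omega
  have huprod : (∏ i ∈ Finset.range (k + 1 - (m+1)),
      u (n + (k+1) - descEnum A i - i) (descEnum A i)) =
      ∏ i ∈ Finset.range (k - m), u (n + 1 + k - descEnum A i - i) (descEnum A i) := by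
    rw [hrange]
    apply Finset.prod_congr rfl
    intro i _
    congr 1
    omega
  set B := Finset.Icc 1 (k+1) \ A with hB
  have hmemB : k + 1 ∈ B := by
    rw [hB, Finset.mem_sdiff, Finset.mem_Icc]
    exact ⟨⟨by omega, le_refl _⟩, hnm⟩
  have hmaxB : ∀ x ∈ B, x ≤ k + 1 := by
    intro x hx
    rw [hB, Finset.mem_sdiff, Finset.mem_Icc] at hx
    omega
  have h0 : descEnum B 0 = k + 1 := descEnum_zero_max' hmemB hmaxB
  have herase : B.erase (k+1) = Finset.Icc 1 k \ A := by
    ext x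
    simp only [Finset.mem_erase, hB, Finset.mem_sdiff, Finset.mem_Icc]
    constructor
    · rintro ⟨hne, ⟨h1, h2⟩, h3⟩
      exact ⟨⟨h1, by omega⟩, h3⟩
    · rintro ⟨⟨h1, h2⟩, h3⟩
      exact ⟨by omega, ⟨h1, by omega⟩, h3⟩
  have hvprod : (∏ j ∈ Finset.range (m+1), v (n + j) (descEnum B j)) =
      v n (k+1) * ∏ j ∈ Finset.range m, v (n + 1 + j) (descEnum (Finset.Icc 1 k \ A) j) := by
    rw [Finset.prod_range_succ']
    have h1 : ∀ j ∈ Finset.range m, v (n + (j+1)) (descEnum B (j+1)) =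
        v (n + 1 + j) (descEnum (Finset.Icc 1 k \ A) j) := by
      intro j _
      rw [descEnum_succ_max' hmemB hmaxB j, herase]
      congr 1
      omega
    rw [Finset.prod_congr rfl h1, add_zero, h0]
    ring
  rw [huprod, hvprod]
  ring

lemma C_eq_D (u v : ℕ → ℕ → R) : ∀ k n ℓ, ℓ ≤ k → eulerSeidelCoeff u v n k ℓ = D u v n k ℓ := by
  intro k
  induction k with
  | zero =>
    intro n ℓ hℓ
    interval_cases ℓ
    simp [eulerSeidelCoeff, D]
  | succ k ih =>
    intro n ℓ hℓ
    rw [eulerSeidelCoeff,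
      ← Finset.sum_filter_add_sum_filter_not _ (fun A => k + 1 ∈ A)]
    cases ℓ with
    | zero =>
      rw [partA u v n k 0 (Nat.zero_le _), partB0, ih n 0 (Nat.zero_le _), add_zero]
      show _ = D u v n (k+1) 0
      simp [D]
    | succ m =>
      rw [partB u v n k m (by omega), ih (n+1) m (by omega)]
      by_cases h : m + 1 ≤ k
      · rw [partA u v n k (m+1) h, ih n (m+1) h]
        show _ = D u v n (k+1) (m+1)
        simp [D]
      · have hm : m = k := by omega
        subst hm
        rw [partA']
        show (0 : R) + _ = D u v n (m+1) (m+1)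
        simp [D, D_eq_zero u v m n (m+1) (by omega)]

/-- The Euler–Seidel matrix generated by an initial sequence. -/
def mkSeq (u v : ℕ → ℕ → R) (f : ℕ → R) : ℕ → ℕ → R
  | n, 0 => f n
  | n, (k+1) => u n (k+1) * mkSeq u v f n k + v n (k+1) * mkSeq u v f (n+1) k

lemma key_lemma (u v : ℕ → ℕ → R) {r : ℕ → ℕ → R} (hr : IsFinalCoeff u v r) :
    ∀ k ℓ, ℓ ≤ k → r k ℓ = D u v 0 k ℓ := by
  intro k ℓ hℓ
  set f : ℕ → R := fun n => if n = ℓ then 1 else 0 with hf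
  set a := mkSeq u v f with haa
  have ha : ∀ n k, a n (k + 1) = u n (k + 1) * a n k + v n (k + 1) * a (n + 1) k :=
    fun n k => rfl
  have hzero : ∀ x, a x 0 = if x = ℓ then 1 else 0 := fun x => rfl
  have h1 := hr.2 a ha k
  have h2 := D_expand u v a ha k 0
  simp only [hzero, zero_add, mul_ite, mul_one, mul_zero] at h1 h2
  rw [Finset.sum_ite_eq' _ ℓ, if_pos (Finset.mem_range.2 (by omega))] at h1
  rw [Finset.sum_ite_eq' _ ℓ, if_pos (Finset.mem_range.2 (by omega))] at h2
  rw [← h1, ← h2]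

end Aux

/-- Corollary 2.8: there is a unique lower-triangular family `r` with
`a_0^k = Σ_{ℓ ≤ k} r(k,ℓ) a_ℓ^0` for every initial sequence, namely `r(k,ℓ) = C_0(k,ℓ)`. -/
theorem existsUnique_finalCoeff {R : Type*} [CommRing R] [Nontrivial R]
    (u v : ℕ → ℕ → R) :
    (∃! r : ℕ → ℕ → R, IsFinalCoeff u v r) ∧
      ∀ r : ℕ → ℕ → R, IsFinalCoeff u v r →
        ∀ k ℓ, ℓ ≤ k → r k ℓ = eulerSeidelCoeff u v 0 k ℓ := by
  have hD : IsFinalCoeff u v (fun k ℓ => D u v 0 k ℓ) := by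
    constructor
    · exact fun k ℓ h => D_eq_zero u v k 0 ℓ h
    · intro a ha k
      simpa using D_expand u v a ha k 0
  constructor
  · refine ⟨fun k ℓ => D u v 0 k ℓ, hD, ?_⟩
    intro r hr
    funext k ℓ
    by_cases h : ℓ ≤ k
    · exact key_lemma u v hr k ℓ h
    · rw [hr.1 k ℓ (by omega), D_eq_zero u v k 0 ℓ (by omega)]
  · intro r hr k ℓ h
    rw [key_lemma u v hr k ℓ h]
    exact (C_eq_D u v k 0 ℓ h).symm
end

section
/- Let p, q ∈ ℝ be constants, let (a_n)_{n≥0} be a real sequence, and let (a_n^k) satisfy a_n^0 = a_n and a_n^k = p·a_n^{k−1} + (q/(n+1))·a_{n+1}^{k−1} for n ≥ 0, k ≥ 1. Then the ordinary generating function of the final sequence satisfies ā(t) = (1/(1−p t)) · A( q t/(1−p t) ) as formal power series in ℝ⟦t⟧; equivalently, for every k ≥ 0, a_0^k = Σ_{ℓ=0}^{k} binom(k,ℓ) · p^{k−ℓ} · (q^ℓ/ℓ!) · a_ℓ^0. -/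
open PowerSeries

section Aux

lemma hockey (ℓ : ℕ) : ∀ k, ∑ i ∈ Finset.range (k+1), i.choose ℓ = (k+1).choose (ℓ+1) := by
  intro k
  induction k with
  | zero => cases ℓ <;> simp [Nat.choose_eq_zero_of_lt]
  | succ k ih =>
      rw [Finset.sum_range_succ, ih, Nat.choose_succ_succ (k+1) ℓ, add_comm]

lemma XB (p : ℝ) : ∀ (ℓ k : ℕ),
    coeff k (X ^ ℓ * (PowerSeries.mk fun n => p ^ n) ^ (ℓ+1)) = (k.choose ℓ : ℝ) * p ^ (k - ℓ) := by
  intro ℓ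
  induction ℓ with
  | zero => intro k; simp
  | succ ℓ ih =>
      intro k
      have hre : X ^ (ℓ+1) * (PowerSeries.mk fun n => p ^ n) ^ (ℓ+2)
          = ((X ^ ℓ * (PowerSeries.mk fun n => p ^ n) ^ (ℓ+1)) * (PowerSeries.mk fun n => p ^ n)) * X := by
        ring
      rw [hre]
      cases k with
      | zero =>
          simp [PowerSeries.coeff_zero_eq_constantCoeff, map_mul]
      | succ k =>
          rw [PowerSeries.coeff_succ_mul_X, PowerSeries.coeff_mul]
          rw [Finset.Nat.sum_antidiagonal_eq_sum_range_succ_mk]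
          have : ∀ i ∈ Finset.range (k+1), coeff i (X ^ ℓ * (PowerSeries.mk fun n => p ^ n) ^ (ℓ+1)) *
              coeff (k - i) (PowerSeries.mk fun n => p ^ n) = (i.choose ℓ : ℝ) * p ^ (k - ℓ) := by
            intro i hi
            rw [Finset.mem_range] at hi
            rw [ih i, PowerSeries.coeff_mk]
            rcases le_or_gt ℓ i with h | h
            · rw [mul_assoc, ← pow_add]
              congr 2
              omega
            · rw [Nat.choose_eq_zero_of_lt h]
              simp
          rw [Finset.sum_congr rfl this, ← Finset.sum_mul]
          rw [show ((k+1:ℕ) - (ℓ+1)) = k - ℓ by omega]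
          congr 1
          push_cast [← hockey ℓ k]
          rfl

lemma explicitA (p q : ℝ) (a₀ : ℕ → ℝ) (a : ℕ → ℕ → ℝ)
    (h0 : ∀ n, a n 0 = a₀ n)
    (hrec : ∀ n k, a n (k + 1) = p * a n k + q / ((n : ℝ) + 1) * a (n + 1) k) :
    ∀ k n, a n k = ∑ ℓ ∈ Finset.range (k+1),
      (k.choose ℓ : ℝ) * p ^ (k - ℓ) * q ^ ℓ *
        ((n.factorial : ℝ) / ((n + ℓ).factorial : ℝ)) * a₀ (n + ℓ) := by
  have hfac : ∀ m : ℕ, ((m.factorial : ℕ) : ℝ) ≠ 0 :=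
    fun m => Nat.cast_ne_zero.2 m.factorial_ne_zero
  intro k
  induction k with
  | zero =>
      intro n
      simp [h0 n, div_self (hfac n)]
  | succ k ih =>
      intro n
      have hn1 : ((n : ℝ) + 1) ≠ 0 := by positivity
      rw [hrec n k, ih n, ih (n+1)]
      have hS1 : (∑ ℓ ∈ Finset.range (k+1), (k.choose ℓ : ℝ) * p ^ (k - ℓ) * q ^ ℓ *
            ((n.factorial : ℝ) / ((n + ℓ).factorial : ℝ)) * a₀ (n + ℓ))
          = ∑ ℓ ∈ Finset.range (k+1+1), (k.choose ℓ : ℝ) * p ^ (k - ℓ) * q ^ ℓ *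
            ((n.factorial : ℝ) / ((n + ℓ).factorial : ℝ)) * a₀ (n + ℓ) := by
        rw [Finset.sum_range_succ _ (k+1), Nat.choose_succ_self]
        simp
      rw [hS1, Finset.mul_sum, Finset.mul_sum,
        Finset.sum_range_succ' _ (k+1), Finset.sum_range_succ' _ (k+1),
        add_right_comm, ← Finset.sum_add_distrib]
      congr 1
      · refine Finset.sum_congr rfl fun i hi => ?_
        rw [Finset.mem_range] at hi
        have hnat1 : n + 1 + i = n + (i + 1) := by omega
        have hnat2 : k + 1 - (i + 1) = k - i := by omega
        rw [hnat1, hnat2, Nat.choose_succ_succ k i, Nat.factorial_succ n]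
        have hp : (↑(k.choose (i+1)) : ℝ) * (p * p ^ (k - (i+1)))
            = (↑(k.choose (i+1)) : ℝ) * p ^ (k - i) := by
          rcases lt_or_ge i k with h | h
          · congr 1
            rw [← pow_succ']
            congr 1
            omega
          · have : i = k := by omega
            subst this
            simp [Nat.choose_succ_self]
        push_cast
        field_simp
        linear_combination hp * (a₀ (n + (i+1)) * q ^ (i+1))
      · simp [pow_succ]
        ring

lemma Binv (p : ℝ) : (1 - C p * X)⁻¹ = PowerSeries.mk fun n => p ^ n := by
  rw [PowerSeries.inv_eq_iff_mul_eq_one (by simp)]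
  ext n
  rw [mul_sub, mul_one, map_sub]
  have hre : (PowerSeries.mk fun n => (p:ℝ) ^ n) * (C p * X)
      = (C p * PowerSeries.mk fun n => (p:ℝ) ^ n) * X := by ring
  rw [hre]
  cases n with
  | zero => simp
  | succ n =>
      rw [PowerSeries.coeff_succ_mul_X, PowerSeries.coeff_C_mul, PowerSeries.coeff_mk,
        PowerSeries.coeff_mk, PowerSeries.coeff_one]
      simp [pow_succ, mul_comm]

lemma fpow_coeff_zero (p q : ℝ) (ℓ j : ℕ) (h : j < ℓ) :
    coeff j ((C q * X * (PowerSeries.mk fun n => p ^ n)) ^ ℓ) = 0 := by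
  have hdvd : (X : ℝ⟦X⟧) ^ ℓ ∣ (C q * X * (PowerSeries.mk fun n => p ^ n)) ^ ℓ :=
    pow_dvd_pow_of_dvd ⟨C q * (PowerSeries.mk fun n => p ^ n), by ring⟩ ℓ
  exact PowerSeries.X_pow_dvd_iff.mp hdvd j h

end Aux

/-- Formal substitution of the power series `f` into the power series `g`: the series
`g(f(t))`. For `f` with zero constant term (the case used here), the coefficient of `t^n`
in `g(f(t))` is `Σ_{k ≤ n} (coeff k g) · (coeff n (f^k))`. -/
noncomputable def substPS (f g : PowerSeries ℝ) : PowerSeries ℝ :=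
  PowerSeries.mk fun n =>
    ∑ k ∈ Finset.range (n + 1), PowerSeries.coeff k g * PowerSeries.coeff n (f ^ k)

/-- Theorem 2.9: if `a_n^k = p a_n^{k-1} + (q/(n+1)) a_{n+1}^{k-1}`, then the ordinary
generating function of the final sequence is `(1/(1-pt)) A(qt/(1-pt))`; equivalently
`a_0^k = Σ_ℓ binom(k,ℓ) p^{k-ℓ} (q^ℓ/ℓ!) a_ℓ^0`. -/
theorem ogf_final_eq (p q : ℝ) (a₀ : ℕ → ℝ) (a : ℕ → ℕ → ℝ)
    (h0 : ∀ n, a n 0 = a₀ n)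
    (hrec : ∀ n k, a n (k + 1) = p * a n k + q / ((n : ℝ) + 1) * a (n + 1) k) :
    PowerSeries.mk (fun k => a 0 k) =
      (1 - PowerSeries.C p * X)⁻¹ *
        substPS (PowerSeries.C q * X * (1 - PowerSeries.C p * X)⁻¹)
          (PowerSeries.mk fun n => a₀ n / n.factorial) ∧
    ∀ k, a 0 k = ∑ ℓ ∈ Finset.range (k + 1),
      (k.choose ℓ : ℝ) * p ^ (k - ℓ) * (q ^ ℓ / ℓ.factorial) * a₀ ℓ := by
  have part2 : ∀ k, a 0 k = ∑ ℓ ∈ Finset.range (k + 1),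
      (k.choose ℓ : ℝ) * p ^ (k - ℓ) * (q ^ ℓ / ℓ.factorial) * a₀ ℓ := by
    intro k
    rw [explicitA p q a₀ a h0 hrec k 0]
    refine Finset.sum_congr rfl fun ℓ hℓ => ?_
    simp only [Nat.factorial_zero, Nat.cast_one, zero_add]
    ring
  refine ⟨?_, part2⟩
  rw [Binv]
  set B : ℝ⟦X⟧ := PowerSeries.mk fun n => p ^ n with hB
  set f : ℝ⟦X⟧ := C q * X * B with hf
  set g : ℝ⟦X⟧ := PowerSeries.mk fun n => a₀ n / n.factorial with hg
  ext k
  rw [PowerSeries.coeff_mk, PowerSeries.coeff_mul]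
  symm
  have hS : ∀ j ≤ k, coeff j (substPS f g)
      = ∑ ℓ ∈ Finset.range (k+1), (a₀ ℓ / ℓ.factorial) * coeff j (f ^ ℓ) := by
    intro j hj
    rw [substPS, PowerSeries.coeff_mk]
    have h1 : ∑ ℓ ∈ Finset.range (j+1), coeff ℓ g * coeff j (f ^ ℓ)
        = ∑ ℓ ∈ Finset.range (k+1), coeff ℓ g * coeff j (f ^ ℓ) :=
      Finset.sum_subset (Finset.range_subset_range.2 (by omega)) (fun ℓ _ hℓ => by
        rw [hf, fpow_coeff_zero p q ℓ j
          (by rw [Finset.mem_range, not_lt] at hℓ; omega), mul_zero])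
    rw [h1]
    exact Finset.sum_congr rfl fun ℓ _ => by rw [hg, PowerSeries.coeff_mk]
  calc ∑ x ∈ Finset.HasAntidiagonal.antidiagonal k, coeff x.1 B * coeff x.2 (substPS f g)
      = ∑ x ∈ Finset.HasAntidiagonal.antidiagonal k, ∑ ℓ ∈ Finset.range (k+1),
          (a₀ ℓ / ℓ.factorial) * (coeff x.1 B * coeff x.2 (f ^ ℓ)) := by
        refine Finset.sum_congr rfl fun x hx => ?_
        rw [Finset.HasAntidiagonal.mem_antidiagonal] at hx
        rw [hS x.2 (by omega), Finset.mul_sum]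
        exact Finset.sum_congr rfl fun ℓ _ => by ring
    _ = ∑ ℓ ∈ Finset.range (k+1), (a₀ ℓ / ℓ.factorial) *
          ∑ x ∈ Finset.HasAntidiagonal.antidiagonal k, coeff x.1 B * coeff x.2 (f ^ ℓ) := by
        rw [Finset.sum_comm]
        exact Finset.sum_congr rfl fun ℓ _ => (Finset.mul_sum _ _ _).symm
    _ = ∑ ℓ ∈ Finset.range (k+1), (a₀ ℓ / ℓ.factorial) * coeff k (B * f ^ ℓ) := by
        exact Finset.sum_congr rfl fun ℓ _ => by rw [PowerSeries.coeff_mul]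
    _ = ∑ ℓ ∈ Finset.range (k+1), (a₀ ℓ / ℓ.factorial) *
          (q ^ ℓ * ((k.choose ℓ : ℝ) * p ^ (k - ℓ))) := by
        refine Finset.sum_congr rfl fun ℓ _ => ?_
        have hBf : B * f ^ ℓ = C (q ^ ℓ) * (X ^ ℓ * B ^ (ℓ+1)) := by
          rw [hf, mul_pow, mul_pow, ← map_pow]
          ring
        rw [hBf, PowerSeries.coeff_C_mul, hB, XB p ℓ k]
    _ = a 0 k := by
        rw [part2 k]
        exact Finset.sum_congr rfl fun ℓ _ => by ring
end

section
/- Let p, q ∈ ℝ be constants, let (a_n)_{n≥0} be a real sequence, and let (a_n^k) satisfy a_n^0 = a_n and a_n^k = p·k·a_n^{k−1} + q·k·a_{n+1}^{k−1} for n ≥ 0, k ≥ 1. Then the exponential generating function of the final sequence satisfies Ā(t) = (1/(1−p t)) · a( q t/(1−p t) ) as formal power series in ℝ⟦t⟧; equivalently, for every k ≥ 0, a_0^k = k! · Σ_{ℓ=0}^{k} binom(k,ℓ) · p^{k−ℓ} · q^ℓ · a_ℓ^0. -/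
open PowerSeries

private lemma key_sum (p q : ℝ) (b : ℕ → ℝ) (k : ℕ) :
    ∑ ℓ ∈ Finset.range (k + 2), ((k+1).choose ℓ : ℝ) * p ^ (k + 1 - ℓ) * q ^ ℓ * b ℓ
      = p * ∑ ℓ ∈ Finset.range (k + 1), (k.choose ℓ : ℝ) * p ^ (k - ℓ) * q ^ ℓ * b ℓ
        + q * ∑ ℓ ∈ Finset.range (k + 1), (k.choose ℓ : ℝ) * p ^ (k - ℓ) * q ^ ℓ * b (ℓ + 1) := by
  rw [Finset.sum_range_succ' _ (k + 1)]
  have h1 : ∀ j ∈ Finset.range (k+1),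
      (((k+1).choose (j+1) : ℝ)) * p ^ (k + 1 - (j+1)) * q ^ (j+1) * b (j+1)
      = (k.choose j : ℝ) * p ^ (k - j) * q ^ (j+1) * b (j+1)
        + (k.choose (j+1) : ℝ) * p ^ (k - j) * q ^ (j+1) * b (j+1) := by
    intro j hj
    rw [Nat.choose_succ_succ']
    push_cast
    ring
  rw [Finset.sum_congr rfl h1, Finset.sum_add_distrib]
  have h2 : ∑ j ∈ Finset.range (k+1), (k.choose j : ℝ) * p ^ (k - j) * q ^ (j+1) * b (j+1)
      = q * ∑ ℓ ∈ Finset.range (k + 1), (k.choose ℓ : ℝ) * p ^ (k - ℓ) * q ^ ℓ * b (ℓ + 1) := by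
    rw [Finset.mul_sum]; exact Finset.sum_congr rfl fun j hj => by ring
  have h3 : ∑ j ∈ Finset.range (k+1), (k.choose (j+1) : ℝ) * p ^ (k - j) * q ^ (j+1) * b (j+1)
        + ((k+1).choose 0 : ℝ) * p ^ (k + 1 - 0) * q ^ 0 * b 0
      = p * ∑ ℓ ∈ Finset.range (k + 1), (k.choose ℓ : ℝ) * p ^ (k - ℓ) * q ^ ℓ * b ℓ := by
    rw [Finset.mul_sum,
      Finset.sum_range_succ' (fun ℓ => p * ((k.choose ℓ : ℝ) * p ^ (k - ℓ) * q ^ ℓ * b ℓ)) k]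
    rw [Finset.sum_range_succ]
    simp only [Nat.choose_succ_self, Nat.cast_zero, zero_mul, add_zero]
    congr 1
    · exact Finset.sum_congr rfl fun j hj => by
        have hj' : j < k := Finset.mem_range.mp hj
        have : k - (j+1) + 1 = k - j := by omega
        rw [← this, pow_succ]; ring
    · simp [pow_succ]; ring
  rw [← h2, ← h3]; ring

private lemma geom_mul (p : ℝ) :
    (1 - PowerSeries.C p * X) * PowerSeries.mk (fun n => p ^ n) = 1 := by
  ext n
  rw [sub_mul, one_mul, map_sub, mul_assoc]
  cases n with
  | zero => simp
  | succ m =>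
      rw [PowerSeries.coeff_C_mul, PowerSeries.coeff_succ_X_mul]
      simp [pow_succ, mul_comm]

private lemma coeff_geom_pow (p : ℝ) (ℓ m : ℕ) :
    PowerSeries.coeff m ((PowerSeries.mk (fun n => p ^ n) : PowerSeries ℝ) ^ (ℓ + 1))
      = ((m + ℓ).choose ℓ : ℝ) * p ^ m := by
  induction ℓ generalizing m with
  | zero => simp
  | succ j ih =>
      rw [pow_succ, PowerSeries.coeff_mul, Finset.Nat.sum_antidiagonal_eq_sum_range_succ_mk]
      have h1 : ∀ i ∈ Finset.range (m+1),
          PowerSeries.coeff i ((PowerSeries.mk (fun n => p ^ n) : PowerSeries ℝ) ^ (j+1))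
            * PowerSeries.coeff (m - i) (PowerSeries.mk (fun n => p ^ n))
          = ((i + j).choose j : ℝ) * p ^ m := by
        intro i hi
        have hi' : i ≤ m := Nat.lt_succ_iff.mp (Finset.mem_range.mp hi)
        rw [ih, PowerSeries.coeff_mk]
        have : p ^ i * p ^ (m - i) = p ^ m := by
          rw [← pow_add]; congr 1; omega
        rw [mul_assoc, this]
      rw [Finset.sum_congr rfl h1, ← Finset.sum_mul, ← Nat.cast_sum,
        Nat.sum_range_add_choose m j, show m + j + 1 = m + (j + 1) from rfl]

private lemma coeff_f_pow (p q : ℝ) (j m : ℕ) :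
    PowerSeries.coeff (m+1)
        ((PowerSeries.C q * X * PowerSeries.mk (fun n => p ^ n)) ^ (j+1))
      = if j ≤ m then q ^ (j+1) * ((m.choose j : ℝ) * p ^ (m - j)) else 0 := by
  have h : (PowerSeries.C q * X * PowerSeries.mk (fun n => p ^ n)) ^ (j+1)
      = PowerSeries.C (q ^ (j+1))
          * (X ^ (j+1) * (PowerSeries.mk (fun n => p ^ n) : PowerSeries ℝ) ^ (j+1)) := by
    rw [mul_pow, mul_pow, ← map_pow]; ring
  rw [h, PowerSeries.coeff_C_mul, PowerSeries.coeff_X_pow_mul']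
  have hiff : (j + 1 ≤ m + 1) = (j ≤ m) := by simp
  split_ifs with h1 h2 h2
  · rw [show m + 1 - (j+1) = m - j from by omega, coeff_geom_pow,
      show m - j + j = m from by omega]
  · exact absurd (by omega : j ≤ m) h2
  · exact absurd (by omega : j + 1 ≤ m + 1) h1
  · rw [mul_zero]

private lemma closed_form (p q : ℝ) (a₀ : ℕ → ℝ) (a : ℕ → ℕ → ℝ)
    (h0 : ∀ n, a n 0 = a₀ n)
    (hrec : ∀ n k, a n (k + 1) =
      p * ((k : ℝ) + 1) * a n k + q * ((k : ℝ) + 1) * a (n + 1) k) :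
    ∀ k n, a n k = (k.factorial : ℝ) *
      ∑ ℓ ∈ Finset.range (k+1), (k.choose ℓ : ℝ) * p ^ (k - ℓ) * q ^ ℓ * a₀ (n + ℓ) := by
  intro k
  induction k with
  | zero => intro n; simp [h0]
  | succ k ih =>
      intro n
      rw [hrec, ih n, ih (n+1)]
      have hb : ∀ ℓ, a₀ (n + (ℓ + 1)) = a₀ (n + 1 + ℓ) := fun ℓ => by
        congr 1; omega
      have hkey := key_sum p q (fun ℓ => a₀ (n + ℓ)) k
      simp only [hb] at hkey
      rw [show k + 1 + 1 = k + 2 from rfl, hkey, Nat.factorial_succ]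
      push_cast
      ring

/-- Theorem 2.10: if `a_n^k = pk a_n^{k-1} + qk a_{n+1}^{k-1}`, then the exponential
generating function of the final sequence is `(1/(1-pt)) a(qt/(1-pt))`; equivalently
`a_0^k = k! Σ_ℓ binom(k,ℓ) p^{k-ℓ} q^ℓ a_ℓ^0`. -/
theorem egf_final_eq (p q : ℝ) (a₀ : ℕ → ℝ) (a : ℕ → ℕ → ℝ)
    (h0 : ∀ n, a n 0 = a₀ n)
    (hrec : ∀ n k, a n (k + 1) =
      p * ((k : ℝ) + 1) * a n k + q * ((k : ℝ) + 1) * a (n + 1) k) :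
    PowerSeries.mk (fun k => a 0 k / k.factorial) =
      (1 - PowerSeries.C p * X)⁻¹ *
        substPS (PowerSeries.C q * X * (1 - PowerSeries.C p * X)⁻¹)
          (PowerSeries.mk fun n => a₀ n) ∧
    ∀ k, a 0 k = (k.factorial : ℝ) * ∑ ℓ ∈ Finset.range (k + 1),
      (k.choose ℓ : ℝ) * p ^ (k - ℓ) * q ^ ℓ * a₀ ℓ := by
  have hA := closed_form p q a₀ a h0 hrec
  have hfin : ∀ k, a 0 k = (k.factorial : ℝ) * ∑ ℓ ∈ Finset.range (k + 1),
      (k.choose ℓ : ℝ) * p ^ (k - ℓ) * q ^ ℓ * a₀ ℓ := by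
    intro k; simpa using hA k 0
  refine ⟨?_, hfin⟩
  have hu := geom_mul p
  have hc : constantCoeff (1 - PowerSeries.C p * X) ≠ 0 := by
    rw [map_sub, map_one, map_mul, constantCoeff_X, mul_zero, sub_zero]
    exact one_ne_zero
  have hinv : (1 - PowerSeries.C p * X)⁻¹ = PowerSeries.mk (fun n => p ^ n) :=
    ((PowerSeries.eq_inv_iff_mul_eq_one hc).mpr (by rw [mul_comm]; exact hu)).symm
  rw [hinv]
  set T : ℕ → ℝ := fun k => ∑ ℓ ∈ Finset.range (k+1),
    (k.choose ℓ : ℝ) * p ^ (k - ℓ) * q ^ ℓ * a₀ ℓ with hT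
  have hfac : ∀ k : ℕ, ((k.factorial : ℝ)) ≠ 0 :=
    fun k => Nat.cast_ne_zero.mpr k.factorial_ne_zero
  have hmk : PowerSeries.mk (fun k => a 0 k / k.factorial) = PowerSeries.mk T := by
    ext k
    rw [PowerSeries.coeff_mk, PowerSeries.coeff_mk, hfin k, mul_comm, mul_div_assoc,
      div_self (hfac k), mul_one]
  rw [hmk]
  have hHT : (1 - PowerSeries.C p * X) * PowerSeries.mk T
      = substPS (PowerSeries.C q * X * PowerSeries.mk (fun n => p ^ n))
          (PowerSeries.mk fun n => a₀ n) := by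
    ext k
    rw [sub_mul, one_mul, map_sub, mul_assoc, PowerSeries.coeff_C_mul]
    cases k with
    | zero =>
        simp [substPS, hT]
    | succ m =>
        rw [PowerSeries.coeff_succ_X_mul, PowerSeries.coeff_mk, PowerSeries.coeff_mk]
        have hR : PowerSeries.coeff (m+1)
            (substPS (PowerSeries.C q * X * PowerSeries.mk (fun n => p ^ n))
              (PowerSeries.mk fun n => a₀ n))
            = ∑ j ∈ Finset.range (m+1),
                a₀ (j+1) * (q ^ (j+1) * ((m.choose j : ℝ) * p ^ (m - j))) := by
          rw [substPS, PowerSeries.coeff_mk, Finset.sum_range_succ' _ (m+1)]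
          have h0' : PowerSeries.coeff 0 (PowerSeries.mk fun n => a₀ n)
              * PowerSeries.coeff (m+1)
                ((PowerSeries.C q * X * PowerSeries.mk fun n => p ^ n) ^ 0) = 0 := by
            simp
          rw [h0', add_zero]
          refine Finset.sum_congr rfl fun j hj => ?_
          have hj' : j ≤ m := Nat.lt_succ_iff.mp (Finset.mem_range.mp hj)
          rw [PowerSeries.coeff_mk, coeff_f_pow, if_pos hj']
        rw [hR]
        have hkey := key_sum p q a₀ m
        have hTm1 : T (m+1) = p * T m + q * ∑ ℓ ∈ Finset.range (m + 1),
            (m.choose ℓ : ℝ) * p ^ (m - ℓ) * q ^ ℓ * a₀ (ℓ + 1) := by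
          rw [hT]; exact hkey
        rw [hTm1, add_sub_cancel_left, Finset.mul_sum]
        exact Finset.sum_congr rfl fun j hj => by ring
  calc PowerSeries.mk T
      = (PowerSeries.mk (fun n => p ^ n) * (1 - PowerSeries.C p * X))
          * PowerSeries.mk T := by
        rw [mul_comm (PowerSeries.mk fun n => p ^ n), hu, one_mul]
    _ = _ := by rw [mul_assoc, hHT]
end

section
/- Let (δ_n^k)_{n,k≥0} be the integer array defined by δ_n^0 = 1 for all n ≥ 0 and δ_n^k = −δ_n^{k−1} + (n+1)·δ_{n+1}^{k−1} for all n ≥ 0 and k ≥ 1. Then for all n ≥ 0 and k ≥ 0, δ_n^k = Σ_{ℓ=0}^{k} (−1)^{k−ℓ} · binom(k,ℓ) · (n+ℓ)!/n!, where (n+ℓ)!/n! = ∏_{i=1}^{ℓ} (n+i) is the rising factorial. -/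
open Finset

private def Q (n ℓ : ℕ) : ℤ := ∏ j ∈ Finset.range ℓ, ((n : ℤ) + 1 + j)

private lemma Q_succ (n ℓ : ℕ) : Q n (ℓ + 1) = ((n : ℤ) + 1) * Q (n + 1) ℓ := by
  unfold Q
  rw [Finset.prod_range_succ']
  have h0 : ((n : ℤ) + 1 + ((0 : ℕ) : ℤ)) = (n : ℤ) + 1 := by push_cast; ring
  rw [h0, mul_comm]
  congr 1
  refine Finset.prod_congr rfl fun j _ => ?_
  push_cast; ring

private lemma Icc_prod_eq (n ℓ : ℕ) :
    (∏ i ∈ Finset.Icc 1 ℓ, ((n : ℤ) + i)) = Q n ℓ := by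
  induction ℓ with
  | zero => unfold Q; simp
  | succ ℓ ih =>
      rw [Finset.prod_Icc_succ_top (by omega : 1 ≤ ℓ + 1), ih]
      unfold Q
      rw [Finset.prod_range_succ]
      push_cast; ring

private def S (n k : ℕ) : ℤ :=
  ∑ ℓ ∈ Finset.range (k + 1), (-1 : ℤ) ^ (k - ℓ) * (k.choose ℓ : ℤ) * Q n ℓ

private lemma S_rec (n k : ℕ) : S n (k + 1) = -S n k + ((n : ℤ) + 1) * S (n + 1) k := by
  have hQ0 : Q n 0 = 1 := by unfold Q; simp
  have key : (∑ ℓ ∈ Finset.range (k + 2),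
      (-1 : ℤ) ^ (k + 1 - ℓ) * (k.choose ℓ : ℤ) * Q n ℓ) = -S n k := by
    rw [Finset.sum_range_succ]
    simp only [Nat.choose_succ_self, Nat.cast_zero, mul_zero, zero_mul, add_zero]
    unfold S
    rw [← Finset.sum_neg_distrib]
    refine Finset.sum_congr rfl fun ℓ hℓ => ?_
    rw [Finset.mem_range] at hℓ
    have h : k + 1 - ℓ = (k - ℓ) + 1 := by omega
    rw [h, pow_succ]
    ring
  unfold S
  rw [Finset.sum_range_succ' _ (k + 1)]
  have expand : (∑ ℓ ∈ Finset.range (k + 1),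
      (-1 : ℤ) ^ (k + 1 - (ℓ + 1)) * ((k + 1).choose (ℓ + 1) : ℤ) * Q n (ℓ + 1))
      = (∑ ℓ ∈ Finset.range (k + 1),
          (-1 : ℤ) ^ (k - ℓ) * (k.choose ℓ : ℤ) * (((n : ℤ) + 1) * Q (n + 1) ℓ))
        + ∑ ℓ ∈ Finset.range (k + 1),
          (-1 : ℤ) ^ (k - ℓ) * (k.choose (ℓ + 1) : ℤ) * Q n (ℓ + 1) := by
    rw [← Finset.sum_add_distrib]
    refine Finset.sum_congr rfl fun ℓ hℓ => ?_
    rw [Nat.choose_succ_succ, Nat.cast_add, ← Q_succ]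
    have h : k + 1 - (ℓ + 1) = k - ℓ := by omega
    rw [h]
    ring
  rw [expand]
  have shift : (∑ ℓ ∈ Finset.range (k + 1),
      (-1 : ℤ) ^ (k - ℓ) * (k.choose (ℓ + 1) : ℤ) * Q n (ℓ + 1))
      + (-1 : ℤ) ^ (k + 1 - 0) * ((k + 1).choose 0 : ℤ) * Q n 0 = -S n k := by
    rw [← key, Finset.sum_range_succ' _ (k + 1)]
    congr 1
    · refine Finset.sum_congr rfl fun ℓ hℓ => ?_
      have h : k + 1 - (ℓ + 1) = k - ℓ := by omega
      rw [h]
    · simp [hQ0]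
  rw [add_assoc, shift, add_comm]
  congr 1
  rw [Finset.mul_sum]
  refine Finset.sum_congr rfl fun ℓ _ => ?_
  ring

/-- Theorem 3.1: for the Euler–Seidel matrix `δ` with `u = -1`, `v(n,k) = n+1` and
constant initial sequence `1`, we have
`δ_n^k = Σ_{ℓ=0}^{k} (-1)^{k-ℓ} binom(k,ℓ) (n+ℓ)!/n!`, where
`(n+ℓ)!/n! = ∏_{i=1}^{ℓ} (n+i)`. -/
theorem delta_eq_sum (δ : ℕ → ℕ → ℤ)
    (h0 : ∀ n, δ n 0 = 1)
    (hrec : ∀ n k, δ n (k + 1) = -δ n k + ((n : ℤ) + 1) * δ (n + 1) k) :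
    ∀ n k, δ n k = ∑ ℓ ∈ Finset.range (k + 1),
      (-1 : ℤ) ^ (k - ℓ) * (k.choose ℓ : ℤ) * ∏ i ∈ Finset.Icc 1 ℓ, ((n : ℤ) + i) := by
  have main : ∀ k n, δ n k = S n k := by
    intro k
    induction k with
    | zero => intro n; unfold S Q; simpa using h0 n
    | succ k ih =>
        intro n
        rw [hrec, ih, ih, S_rec]
  intro n k
  rw [main k n]
  unfold S
  refine Finset.sum_congr rfl fun ℓ _ => ?_
  rw [Icc_prod_eq]
end

section
/- Let (δ_n^k)_{n,k≥0} be the integer array defined by δ_n^0 = 1 for all n ≥ 0 and δ_n^k = −δ_n^{k−1} + (n+1)·δ_{n+1}^{k−1} for all n ≥ 0 and k ≥ 1. Then for every k ≥ 0, δ_0^k equals the number of derangements of a set of k elements, i.e. δ_0^k = Σ_{ℓ=0}^{k} (−1)^{k−ℓ} · k!/(k−ℓ)! = d_k, the number of fixed-point-free permutations of {1,…,k}. -/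
open Finset

private lemma asc_step (n ℓ : ℕ) :
    ((n : ℤ) + 1) * ((n + 2).ascFactorial ℓ : ℤ) = ((n + 1).ascFactorial (ℓ + 1) : ℤ) := by
  have h : (n + 1) * (n + 2).ascFactorial ℓ = (n + 1).ascFactorial (ℓ + 1) := by
    rw [Nat.ascFactorial_succ]
    have := Nat.succ_ascFactorial (n + 1) ℓ
    simpa [Nat.succ_eq_add_one] using this
  push_cast [← h]
  ring

private lemma delta_key (δ : ℕ → ℕ → ℤ)
    (h0 : ∀ n, δ n 0 = 1)
    (hrec : ∀ n k, δ n (k + 1) = -δ n k + ((n : ℤ) + 1) * δ (n + 1) k) :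
    ∀ k n, δ n k = ∑ ℓ ∈ range (k + 1),
      (-1 : ℤ) ^ (k - ℓ) * (k.choose ℓ : ℤ) * (((n + 1).ascFactorial ℓ : ℕ) : ℤ) := by
  intro k
  induction k with
  | zero => intro n; simp [h0]
  | succ k ih =>
    intro n
    rw [hrec n k, ih n, ih (n + 1)]
    -- rewrite (n+1) * second sum
    rw [Finset.mul_sum]
    have hsum2 : ∀ ℓ ∈ range (k + 1),
        ((n : ℤ) + 1) * ((-1 : ℤ) ^ (k - ℓ) * (k.choose ℓ : ℤ) * (((n + 2).ascFactorial ℓ : ℕ) : ℤ))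
        = (-1 : ℤ) ^ (k - ℓ) * (k.choose ℓ : ℤ) * (((n + 1).ascFactorial (ℓ + 1) : ℕ) : ℤ) := by
      intro ℓ _
      rw [← asc_step n ℓ]; ring
    rw [Finset.sum_congr rfl hsum2]
    -- split the RHS sum at m = 0
    rw [Finset.sum_range_succ' (fun m => (-1 : ℤ) ^ (k + 1 - m) * ((k + 1).choose m : ℤ) *
      (((n + 1).ascFactorial m : ℕ) : ℤ)) (k + 1)]
    simp only [Nat.succ_sub_succ, Nat.choose_succ_succ', Nat.sub_zero, Nat.choose_zero_right,
      Nat.ascFactorial_zero]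
    push_cast
    rw [show (∑ i ∈ range (k + 1), (-1 : ℤ) ^ (k - i) * (((k.choose i : ℤ)) + (k.choose (i + 1) : ℤ)) *
        (((n + 1).ascFactorial (i + 1) : ℕ) : ℤ))
      = (∑ i ∈ range (k + 1), (-1 : ℤ) ^ (k - i) * (k.choose i : ℤ) *
          (((n + 1).ascFactorial (i + 1) : ℕ) : ℤ))
        + ∑ i ∈ range (k + 1), (-1 : ℤ) ^ (k - i) * (k.choose (i + 1) : ℤ) *
          (((n + 1).ascFactorial (i + 1) : ℕ) : ℤ) from by
        rw [← Finset.sum_add_distrib]; exact Finset.sum_congr rfl fun i _ => by ring]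
    -- it remains to match the first sum (cancels with (n+1)*S2) and show
    -- -S1 = second sum + (-1)^(k+1)
    have hS1 : -(∑ ℓ ∈ range (k + 1), (-1 : ℤ) ^ (k - ℓ) * (k.choose ℓ : ℤ) *
        (((n + 1).ascFactorial ℓ : ℕ) : ℤ))
        = (∑ i ∈ range (k + 1), (-1 : ℤ) ^ (k - i) * (k.choose (i + 1) : ℤ) *
            (((n + 1).ascFactorial (i + 1) : ℕ) : ℤ)) + (-1 : ℤ) ^ (k + 1) := by
      rw [Finset.sum_range_succ' (fun ℓ => (-1 : ℤ) ^ (k - ℓ) * (k.choose ℓ : ℤ) *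
        (((n + 1).ascFactorial ℓ : ℕ) : ℤ)) k]
      rw [Finset.sum_range_succ (fun i => (-1 : ℤ) ^ (k - i) * (k.choose (i + 1) : ℤ) *
        (((n + 1).ascFactorial (i + 1) : ℕ) : ℤ)) k]
      simp only [Nat.choose_succ_self, Nat.cast_zero, Nat.sub_zero, Nat.choose_zero_right,
        Nat.cast_one, Nat.ascFactorial_zero]
      rw [neg_add]
      have : ∀ i ∈ range k, (-1 : ℤ) ^ (k - i) * (k.choose (i + 1) : ℤ) *
          (((n + 1).ascFactorial (i + 1) : ℕ) : ℤ)
          = -((-1 : ℤ) ^ (k - (i + 1)) * (k.choose (i + 1) : ℤ) *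
            (((n + 1).ascFactorial (i + 1) : ℕ) : ℤ)) := by
        intro i hi
        have hik : i < k := Finset.mem_range.mp hi
        have : k - i = (k - (i + 1)) + 1 := by omega
        rw [this, pow_succ]; ring
      rw [Finset.sum_congr rfl this, ← Finset.sum_neg_distrib]
      rw [pow_succ]
      ring
    linarith [hS1]

/-- Equation (3.3): for the Euler–Seidel matrix `δ` with `u = -1`, `v(n,k) = n+1` and
constant initial sequence `1`, the final sequence
`δ_0^k = Σ_{ℓ=0}^{k} (-1)^{k-ℓ} k!/(k-ℓ)!` is the number of derangements of a
`k`-element set. -/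
theorem delta_zero_eq_numDerangements (δ : ℕ → ℕ → ℤ)
    (h0 : ∀ n, δ n 0 = 1)
    (hrec : ∀ n k, δ n (k + 1) = -δ n k + ((n : ℤ) + 1) * δ (n + 1) k) :
    ∀ k, δ 0 k = ∑ ℓ ∈ Finset.range (k + 1), (-1 : ℤ) ^ (k - ℓ) * (k.descFactorial ℓ : ℤ) ∧
      δ 0 k = (numDerangements k : ℤ) := by
  intro k
  have hkey := delta_key δ h0 hrec k 0
  have h1 : δ 0 k = ∑ ℓ ∈ Finset.range (k + 1), (-1 : ℤ) ^ (k - ℓ) * (k.descFactorial ℓ : ℤ) := by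
    rw [hkey]
    refine Finset.sum_congr rfl fun ℓ _ => ?_
    rw [Nat.one_ascFactorial, Nat.descFactorial_eq_factorial_mul_choose]
    push_cast
    ring
  refine ⟨h1, ?_⟩
  rw [h1, numDerangements_sum, ← Finset.sum_range_reflect]
  refine Finset.sum_congr rfl fun j hj => ?_
  have hjk : j ≤ k := by
    have := Finset.mem_range.mp hj; omega
  have h2 : k + 1 - 1 - j = k - j := by omega
  have h3 : k - (k - j) = j := by omega
  rw [h2, h3]
  congr 1
  have : k.descFactorial (k - j) = (j + 1).ascFactorial (k - j) := by
    have := Nat.add_descFactorial_eq_ascFactorial j (k - j)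
    rwa [show j + (k - j) = k by omega] at this
  rw [this]
end

section
/- Let (δ_n^k)_{n,k≥0} be the rational array defined by δ_n^0 = 1 for all n ≥ 0 and δ_n^k = −δ_n^{k−1} + (n+1)·δ_{n+1}^{k−1} for all n ≥ 0 and k ≥ 1. Then the exponential generating function of the final sequence (δ_0^k)_{k≥0} satisfies Σ_{k≥0} δ_0^k t^k/k! = exp(−t) · (1/(1−t)) as formal power series in ℚ⟦t⟧, where exp(−t) = Σ_{n≥0} (−1)^n t^n/n! and 1/(1−t) is the multiplicative inverse of 1−t, i.e. Σ_{n≥0} t^n. -/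
open PowerSeries

lemma key_sum_s15 (δ : ℕ → ℕ → ℚ)
    (h0 : ∀ n, δ n 0 = 1)
    (hrec : ∀ n k, δ n (k + 1) = -δ n k + ((n : ℚ) + 1) * δ (n + 1) k) :
    ∀ k n, δ n k * n.factorial =
      ∑ i ∈ Finset.range (k + 1), (-1 : ℚ) ^ (k + i) * (k.choose i) * (n + i).factorial := by
  intro k
  induction k with
  | zero => intro n; simp [h0]
  | succ k ih =>
    intro n
    have h1 : δ n (k + 1) * n.factorial =
        -(δ n k * n.factorial) + δ (n + 1) k * (n + 1).factorial := by
      rw [hrec n k]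
      push_cast [Nat.factorial_succ]
      ring
    rw [h1, ih n, ih (n + 1)]
    -- now a pure sum identity
    rw [Finset.sum_range_succ' (fun i => (-1 : ℚ) ^ (k + 1 + i) * ((k+1).choose i) * (n + i).factorial) (k+1)]
    have pascal : ∀ i, ((k+1).choose (i+1) : ℚ) = (k.choose i : ℚ) + (k.choose (i+1) : ℚ) := by
      intro i; rw [Nat.choose_succ_succ]; push_cast; ring
    have split : ∀ i ∈ Finset.range (k+1),
        (-1 : ℚ) ^ (k + 1 + (i+1)) * ((k+1).choose (i+1)) * (n + (i+1)).factorial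
        = (-1 : ℚ) ^ (k + i) * (k.choose i) * ((n+1) + i).factorial
          + (-1 : ℚ) ^ (k + 1 + (i+1)) * (k.choose (i+1)) * (n + (i+1)).factorial := by
      intro i _
      rw [pascal i]
      have : (-1 : ℚ) ^ (k + 1 + (i + 1)) = (-1 : ℚ) ^ (k + i) := by
        rw [show k + 1 + (i + 1) = (k + i) + 2 by ring, pow_add]; norm_num
      rw [this]
      have : n + (i + 1) = (n + 1) + i := by ring
      rw [this]; ring
    rw [Finset.sum_congr rfl split, Finset.sum_add_distrib]
    have h2 : (∑ i ∈ Finset.range (k+1),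
        (-1 : ℚ) ^ (k + 1 + (i+1)) * (k.choose (i+1)) * (n + (i+1)).factorial)
        + (-1 : ℚ) ^ (k + 1 + 0) * ((k+1).choose 0) * (n + 0).factorial
        = -∑ i ∈ Finset.range (k + 1), (-1 : ℚ) ^ (k + i) * (k.choose i) * (n + i).factorial := by
      rw [← Finset.sum_neg_distrib]
      rw [Finset.sum_range_succ' (fun i => -((-1 : ℚ) ^ (k + i) * (k.choose i) * (n + i).factorial)) k]
      have top : (∑ i ∈ Finset.range (k+1),
          (-1 : ℚ) ^ (k + 1 + (i+1)) * (k.choose (i+1)) * (n + (i+1)).factorial)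
          = ∑ i ∈ Finset.range k,
          (-1 : ℚ) ^ (k + 1 + (i+1)) * (k.choose (i+1)) * (n + (i+1)).factorial := by
        rw [Finset.sum_range_succ]
        simp
      rw [top]
      congr 1
      · apply Finset.sum_congr rfl
        intro i _
        have : (-1 : ℚ) ^ (k + 1 + (i + 1)) = -(-1 : ℚ) ^ (k + (i + 1)) := by
          rw [show k + 1 + (i + 1) = (k + (i+1)) + 1 by ring, pow_succ]; ring
        rw [this]; ring
      · simp [pow_succ]
    rw [add_assoc, h2]
    ring

lemma delta0_eq_numDerangements (δ : ℕ → ℕ → ℚ)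
    (h0 : ∀ n, δ n 0 = 1)
    (hrec : ∀ n k, δ n (k + 1) = -δ n k + ((n : ℚ) + 1) * δ (n + 1) k) (k : ℕ) :
    δ 0 k = (numDerangements k : ℚ) := by
  have hk := key_sum_s15 δ h0 hrec k 0
  simp only [Nat.factorial_zero, Nat.cast_one, mul_one, zero_add] at hk
  rw [hk]
  have hD : ((numDerangements k : ℚ)) =
      ∑ j ∈ Finset.range (k + 1), (-1 : ℚ) ^ j * ((j + 1).ascFactorial (k - j)) := by
    have h := congrArg (fun z : ℤ => (z : ℚ)) (numDerangements_sum k)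
    push_cast at h
    simpa using h
  rw [hD, ← Finset.sum_range_reflect]
  apply Finset.sum_congr rfl
  intro i hi
  have hik : i ≤ k := Nat.lt_succ_iff.mp (Finset.mem_range.mp hi)
  have h1 : k + 1 - 1 - i = k - i := by omega
  rw [h1]
  have hsign : (-1 : ℚ) ^ (k + (k - i)) = (-1 : ℚ) ^ i := by
    rw [show k + (k - i) = i + 2 * (k - i) by omega, pow_add, pow_mul]; norm_num
  rw [hsign]
  have hasc : ((i + 1).ascFactorial (k - i) : ℚ)
      = (k.choose (k - i) : ℚ) * (k - i).factorial := by
    have h3 : i.factorial * ((i + 1).ascFactorial (k - i)) = k.factorial := by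
      rw [Nat.factorial_mul_ascFactorial]; congr 1; omega
    have h4 : i.factorial * (k.choose (k - i) * (k - i).factorial) = k.factorial := by
      rw [Nat.choose_symm hik,
        show i.factorial * (k.choose i * (k - i).factorial)
          = k.choose i * i.factorial * (k - i).factorial by ring,
        Nat.choose_mul_factorial_mul_factorial hik]
    have h5 := Nat.eq_of_mul_eq_mul_left (Nat.factorial_pos i) (h3.trans h4.symm)
    exact_mod_cast congrArg (Nat.cast : ℕ → ℚ) h5
  rw [hasc]
  ring

/-- Equation (3.4): for the Euler–Seidel matrix `δ` with `u = -1`, `v(n,k) = n+1` and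
constant initial sequence `1`, the exponential generating function of the final sequence
is `exp(-t)/(1-t)` in `ℚ⟦t⟧`. -/
theorem egf_delta_final (δ : ℕ → ℕ → ℚ)
    (h0 : ∀ n, δ n 0 = 1)
    (hrec : ∀ n k, δ n (k + 1) = -δ n k + ((n : ℚ) + 1) * δ (n + 1) k) :
    PowerSeries.mk (fun k => δ 0 k / k.factorial) =
      rescale (-1) (exp ℚ) * (1 - X : PowerSeries ℚ)⁻¹ := by
  have hc : constantCoeff (1 - X : PowerSeries ℚ) ≠ 0 := by simp
  rw [PowerSeries.eq_mul_inv_iff_mul_eq hc]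
  ext n
  rw [mul_sub, mul_one, map_sub, coeff_rescale, coeff_exp]
  cases n with
  | zero =>
    simp [h0, PowerSeries.coeff_zero_eq_constantCoeff]
  | succ k =>
    rw [coeff_succ_mul_X, coeff_mk, coeff_mk]
    rw [delta0_eq_numDerangements δ h0 hrec, delta0_eq_numDerangements δ h0 hrec]
    have hrecD : ((numDerangements (k+1) : ℚ)) = (k + 1) * (numDerangements k : ℚ) - (-1) ^ k := by
      exact_mod_cast congrArg (Int.cast : ℤ → ℚ) (numDerangements_succ k)
    rw [hrecD]
    have hfac : ((k+1).factorial : ℚ) = (k + 1) * k.factorial := by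
      rw [Nat.factorial_succ]; push_cast; ring
    have hk1 : ((k+1 : ℕ) : ℚ) ≠ 0 := by positivity
    have hkf : (k.factorial : ℚ) ≠ 0 := by exact_mod_cast k.factorial_ne_zero
    simp only [Algebra.algebraMap_self, RingHom.id_apply, hfac]
    field_simp [hfac]
    ring
end
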